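/- Let F be a properly parametrized Markov multi-map with forward trajectory space X (with left-shift map T) and associated SFT Σ_M. If (X,T) is topologically transitive, then Σ_M satisfies the Irreducibility Condition (IC). -/

import Mathlib

open Set Topology

/-! ### Generic dynamical notions -/

/-- Topological transitivity of a map. -/
def TopTransitive {α : Type*} [TopologicalSpace α] (T : α → α) : Prop :=
  ∀ U V : Set α, IsOpen U → IsOpen V → U.Nonempty → V.Nonempty →
    ∃ n : ℕ, (T^[n] '' U ∩ V).Nonempty

/-- Topological mixing of a map. -/
def TopMixing {α : Type*} [TopologicalSpace α] (T : α → α) : Prop :=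
  ∀ U V : Set α, IsOpen U → IsOpen V → U.Nonempty → V.Nonempty →
    ∃ N : ℕ, ∀ n, N ≤ n → (T^[n] '' U ∩ V).Nonempty

/-- Density of the set of periodic points of a map. -/
def DensePeriodic {α : Type*} [TopologicalSpace α] (T : α → α) : Prop :=
  Dense {x : α | ∃ p : ℕ, 1 ≤ p ∧ T^[p] x = x}

/-- The metric `d(x,y) = sup_k |x_k - y_k|/(k+1)` on sequence spaces. -/
noncomputable def dseq (x y : ℕ → ℝ) : ℝ := ⨆ k : ℕ, |x k - y k| / ((k : ℝ) + 1)

/-- The specification property for a map `T` with respect to a distance function `d`. -/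
def SpecProp {α : Type*} (T : α → α) (d : α → α → ℝ) : Prop :=
  ∀ ε : ℝ, 0 < ε → ∃ N : ℕ, ∀ l : ℕ, ∀ x : Fin (l + 1) → α, ∀ a b : Fin (l + 1) → ℕ,
    (∀ k, 1 ≤ a k) → (∀ k, a k ≤ b k) →
    (∀ k : Fin l, b k.castSucc < a k.succ ∧ b k.castSucc + N ≤ a k.succ) →
    ∀ p : ℕ, b (Fin.last l) + N ≤ p →
      ∃ z : α, T^[p] z = z ∧
        ∀ k : Fin (l + 1), ∀ i : ℕ, a k ≤ i → i ≤ b k → d (T^[i] z) (T^[i] (x k)) < ε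

/-- The length `ℓ` of a (possibly degenerate) interval. -/
noncomputable def intervalLen (I : Set ℝ) : ℝ := sSup I - sInf I

/-! ### Markov multi-maps -/

/-- A Markov multi-map of the interval, given by a tuple
`(P, A₀, A₁, A₂, D, R, {f_a})` as in the paper, together with the derived data
(inverse maps `g`, interiors `D0`, `R0`, graphs `Gr`, `G0`) which are uniquely
determined by the defining equations below. -/
structure MarkovMultiMap where
  A : Type
  finA : Finite A
  A0 : Set A
  A1 : Set A
  A2 : Set A
  P : Finset ℝ
  D : A → Set ℝ
  R : A → Set ℝ
  f : A → ℝ → ℝ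
  g : A → ℝ → ℝ
  D0 : A → Set ℝ
  R0 : A → Set ℝ
  Gr : A → Set (ℝ × ℝ)
  G0 : A → Set (ℝ × ℝ)
  P_zero : (0 : ℝ) ∈ P
  P_one : (1 : ℝ) ∈ P
  P_sub : (P : Set ℝ) ⊆ Set.Icc 0 1
  A_cover : ∀ a : A, a ∈ A0 ∨ a ∈ A1 ∨ a ∈ A2
  A01 : A0 ∩ A1 = ∅
  A02 : A0 ∩ A2 = ∅
  A12 : A1 ∩ A2 = ∅
  D_A0 : ∀ a ∈ A0, ∃ p ∈ P, ∃ q ∈ P, p < q ∧ (∀ r ∈ P, ¬(p < r ∧ r < q)) ∧ D a = Set.Icc p q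
  D_A12 : ∀ a ∈ A1 ∪ A2, ∃ p ∈ P, D a = {p}
  R_A0 : ∀ a ∈ A0, ∃ u ∈ P, ∃ v ∈ P, u < v ∧ R a = Set.Icc u v
  R_A1 : ∀ a ∈ A1, ∃ u ∈ P, ∃ v ∈ P, u < v ∧ R a = Set.Icc u v ∧
    Set.Icc u v ∩ (P : Set ℝ) = {u, v}
  R_A2 : ∀ a ∈ A2, ∃ u ∈ P, R a = {u}
  f_homeo : ∀ a ∈ A0, ContinuousOn (f a) (D a) ∧ Set.BijOn (f a) (D a) (R a)
  g_A0 : ∀ a ∈ A0, (∀ x ∈ D a, g a (f a x) = x) ∧ ∀ y ∈ R a, g a y ∈ D a ∧ f a (g a y) = y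
  g_A12 : ∀ a ∈ A1 ∪ A2, ∀ y ∈ R a, g a y ∈ D a
  cover : Set.Icc (0 : ℝ) 1 = ⋃ a : A, D a
  D0_A0 : ∀ a ∈ A0, D0 a = interior (D a)
  D0_A12 : ∀ a ∈ A1 ∪ A2, D0 a = D a
  R0_A01 : ∀ a ∈ A0 ∪ A1, R0 a = interior (R a)
  R0_A2 : ∀ a ∈ A2, R0 a = R a
  Gr_A0 : ∀ a ∈ A0, Gr a = {q : ℝ × ℝ | q.1 ∈ D a ∧ q.2 = f a q.1}
  Gr_A12 : ∀ a ∈ A1 ∪ A2, Gr a = (D a) ×ˢ (R a)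
  G0_A0 : ∀ a ∈ A0, G0 a = {q : ℝ × ℝ | q.1 ∈ D0 a ∧ q.2 = f a q.1}
  G0_A1 : ∀ a ∈ A1, G0 a = (D a) ×ˢ (R0 a)
  G0_A2 : ∀ a ∈ A2, G0 a = Gr a

namespace MarkovMultiMap

variable (M : MarkovMultiMap)

/-- The graph `G(F)` of the multi-map. -/
def GF : Set (ℝ × ℝ) := ⋃ a : M.A, M.Gr a

/-- `F` is properly parametrized: the sets `G₀(a)` partition `G(F)`. -/
def ProperlyParametrized : Prop :=
  (⋃ a : M.A, M.G0 a) = M.GF ∧ ∀ a b : M.A, a ≠ b → Disjoint (M.G0 a) (M.G0 b)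

/-- The forward trajectory space `X`. -/
def X : Set (ℕ → ℝ) :=
  {x | (∀ k, x k ∈ Set.Icc (0 : ℝ) 1) ∧ ∀ k, (x k, x (k + 1)) ∈ M.GF}

/-- The left-shift map `T` on the forward trajectory space. -/
def shift : M.X → M.X :=
  fun x => ⟨fun k => x.1 (k + 1), ⟨fun k => x.2.1 (k + 1), fun k => x.2.2 (k + 1)⟩⟩

/-- The inverse trajectory (inverse limit) space `Y`, encoded by `y k = y_{-k}`. -/
def Y : Set (ℕ → ℝ) :=
  {y | (∀ k, y k ∈ Set.Icc (0 : ℝ) 1) ∧ ∀ k, (y (k + 1), y k) ∈ M.GF}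

/-- The right-shift map `S` on the inverse limit space (in the encoding `y k = y_{-k}`). -/
def ishift : M.Y → M.Y :=
  fun y => ⟨fun k => y.1 (k + 1), ⟨fun k => y.2.1 (k + 1), fun k => y.2.2 (k + 1)⟩⟩

/-- The space `X_n` of finite trajectories of length `n`. -/
def finTraj (n : ℕ) : Set (Fin n → ℝ) :=
  {x | (∀ i, x i ∈ Set.Icc (0 : ℝ) 1) ∧
    ∀ i : Fin n, ∀ h : (i : ℕ) + 1 < n, (x i, x ⟨(i : ℕ) + 1, h⟩) ∈ M.GF}

/-- The associated nearest-neighbor SFT `Σ_M`. -/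
def SFT : Set (ℕ → M.A) := {a | ∀ n : ℕ, M.D0 (a (n + 1)) ⊆ M.R0 (a n)}

/-- The word `u` (of length `n`) occurs in some point of `Z`. -/
def WordIn {n : ℕ} (u : Fin n → M.A) (Z : Set (ℕ → M.A)) : Prop :=
  ∃ z ∈ Z, ∃ m : ℕ, ∀ i : Fin n, u i = z (m + (i : ℕ))

/-- `L_n`, the words of length `n` in the language of `Σ_M`. -/
def Lang (n : ℕ) : Set (Fin n → M.A) := {u | M.WordIn u M.SFT}

/-- `(x,u)` is a labeled finite trajectory: `(x_k, x_{k+1}) ∈ G(u_k)` for all `k`. -/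
def Labeled {n : ℕ} (x : Fin (n + 1) → ℝ) (u : Fin n → M.A) : Prop :=
  ∀ i : Fin n, (x i.castSucc, x i.succ) ∈ M.Gr (u i)

/-- `(x,u)` is a special labeled finite trajectory: `(x_k, x_{k+1}) ∈ G₀(u_k)` for all `k`. -/
def SpecialLabeled {n : ℕ} (x : Fin (n + 1) → ℝ) (u : Fin n → M.A) : Prop :=
  ∀ i : Fin n, (x i.castSucc, x i.succ) ∈ M.G0 (u i)

/-- A word `u ∈ L_n` is essential if the set of finite trajectories specially labeled
by `u` is open in `X_{n+1}`. -/
def EssentialWord {n : ℕ} (u : Fin n → M.A) : Prop :=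
  u ∈ M.Lang n ∧ IsOpen {x : M.finTraj (n + 1) | M.SpecialLabeled x.1 u}

/-- A symbol is essential if it appears in some essential word. -/
def EssentialSymbol (a : M.A) : Prop :=
  ∃ n : ℕ, ∃ u : Fin n → M.A, M.EssentialWord u ∧ ∃ i : Fin n, u i = a

/-- `A^(e)`, the set of essential symbols. -/
def Ess : Set M.A := {a | M.EssentialSymbol a}

/-- `E`, the set of essential symbolic sequences. -/
def E : Set (ℕ → M.A) := {z ∈ M.SFT | ∀ i : ℕ, z i ∈ M.Ess}

/-- A word all of whose letters lie in `C`, in the language of `Σ_M`. -/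
def WordOver {n : ℕ} (u : Fin n → M.A) (C : Set M.A) : Prop :=
  u ∈ M.Lang n ∧ ∀ i, u i ∈ C

/-- There is a word of length `n+1` over `C` beginning with `a` and ending with `b`. -/
def WordFromTo (C : Set M.A) (a b : M.A) (n : ℕ) : Prop :=
  ∃ u : Fin (n + 1) → M.A, M.WordOver u C ∧ u 0 = a ∧ u (Fin.last n) = b

/-- `C ⊆ A` is irreducible. -/
def IrreducibleSet (C : Set M.A) : Prop :=
  ∀ a ∈ C, ∀ b ∈ C, ∃ n : ℕ, M.WordFromTo C a b n

/-- `C` is an irreducible component (a maximal irreducible subset of `A`). -/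
def IrreducibleComponent (C : Set M.A) : Prop :=
  M.IrreducibleSet C ∧ ∀ C' : Set M.A, M.IrreducibleSet C' → C ⊆ C' → C' = C

/-- `C ⊆ A` is mixing. -/
def MixingSet (C : Set M.A) : Prop :=
  ∃ N : ℕ, 1 ≤ N ∧ ∀ a ∈ C, ∀ b ∈ C, ∀ n : ℕ, N ≤ n + 1 → M.WordFromTo C a b n

/-- `C` is a mixing component (a maximal mixing subset of `A`). -/
def MixingComponent (C : Set M.A) : Prop :=
  M.MixingSet C ∧ ∀ C' : Set M.A, M.MixingSet C' → C ⊆ C' → C' = C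

/-- The Irreducibility Condition (IC). -/
def IC : Prop := ∃ C : Set M.A, M.IrreducibleComponent C ∧ M.Ess ⊆ C

/-- The Mixing Condition (MC). -/
def MC : Prop := ∃ C : Set M.A, M.MixingComponent C ∧ M.Ess ⊆ C

/-- `Z` is a subshift of `Σ_M`: shift-invariant and closed in the product of discrete
topologies (closedness phrased combinatorially). -/
def IsSubshift (Z : Set (ℕ → M.A)) : Prop :=
  Z ⊆ M.SFT ∧ (∀ z ∈ Z, (fun k => z (k + 1)) ∈ Z) ∧
  ∀ x : ℕ → M.A, (∀ n : ℕ, ∃ z ∈ Z, ∀ i, i < n → z i = x i) → x ∈ Z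

/-- The symbol `a` occurs in some point of `Z`. -/
def SymbolInShift (Z : Set (ℕ → M.A)) (a : M.A) : Prop := ∃ z ∈ Z, ∃ k : ℕ, z k = a

/-- `Z` is transitive on symbols. -/
def TransitiveOnSymbols (Z : Set (ℕ → M.A)) : Prop :=
  ∀ a b : M.A, M.SymbolInShift Z a → M.SymbolInShift Z b →
    ∃ z ∈ Z, ∃ m n : ℕ, z m = a ∧ z (m + n) = b

end MarkovMultiMap

/-- The composition `g_{u₀} ∘ ⋯ ∘ g_{u_n}` of inverse maps along a list of symbols. -/
def gWordList (M : MarkovMultiMap) : List M.A → ℝ → ℝ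
  | [], x => x
  | a :: l, x => M.g a (gWordList M l x)

namespace MarkovMultiMap

/-- The inverse map `g_u` associated to a word `u = u₀⋯u_n`. -/
def gWord (M : MarkovMultiMap) {n : ℕ} (u : Fin (n + 1) → M.A) : ℝ → ℝ :=
  gWordList M (List.ofFn u)

/-- The interval `I_u = g_u(R(u_n))`. -/
def Iword (M : MarkovMultiMap) {n : ℕ} (u : Fin (n + 1) → M.A) : Set ℝ :=
  M.gWord u '' M.R (u (Fin.last n))

/-- The Coding Condition (CC). -/
def CC (M : MarkovMultiMap) : Prop :=
  ∃ Z : Set (ℕ → M.A), M.IsSubshift Z ∧ M.TransitiveOnSymbols Z ∧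
    (∀ y ∈ Set.Icc (0 : ℝ) 1, ∃ a ∈ Z, ∃ x ∈ M.X, x 0 = y ∧
      ∀ i : ℕ, (x i, x (i + 1)) ∈ M.Gr (a i)) ∧
    (∀ ε : ℝ, 0 < ε → ∃ N : ℕ, ∀ n : ℕ, N ≤ n → ∀ u : Fin (n + 1) → M.A,
      M.WordIn u Z → intervalLen (M.Iword u) < ε)

/-- Uniform equicontinuity of the family `{g_u : u ∈ L(C)}`. -/
def UnifEquicontOn (M : MarkovMultiMap) (C : Set M.A) : Prop :=
  ∀ ε : ℝ, 0 < ε → ∃ δ : ℝ, 0 < δ ∧ ∀ n : ℕ, ∀ u : Fin (n + 1) → M.A, M.WordOver u C →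
    ∀ x ∈ M.R (u (Fin.last n)), ∀ y ∈ M.R (u (Fin.last n)),
      |x - y| < δ → |M.gWord u x - M.gWord u y| < ε

end MarkovMultiMap


/-! ### Auxiliary development -/

namespace MarkovMultiMap

variable (M : MarkovMultiMap)

lemma aux_D_sub (a : M.A) : M.D a ⊆ Set.Icc (0:ℝ) 1 := by
  rcases M.A_cover a with h | h | h
  · obtain ⟨p, hp, q, hq, hpq, _, hD⟩ := M.D_A0 a h
    rw [hD]
    exact Set.Icc_subset_Icc (M.P_sub hp).1 (M.P_sub hq).2
  · obtain ⟨p, hp, hD⟩ := M.D_A12 a (Set.mem_union_left _ h)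
    rw [hD]; intro x hx; rw [hx]; exact M.P_sub hp
  · obtain ⟨p, hp, hD⟩ := M.D_A12 a (Set.mem_union_right _ h)
    rw [hD]; intro x hx; rw [hx]; exact M.P_sub hp

lemma aux_R_sub (a : M.A) : M.R a ⊆ Set.Icc (0:ℝ) 1 := by
  rcases M.A_cover a with h | h | h
  · obtain ⟨u, hu, v, hv, huv, hR⟩ := M.R_A0 a h
    rw [hR]; exact Set.Icc_subset_Icc (M.P_sub hu).1 (M.P_sub hv).2
  · obtain ⟨u, hu, v, hv, huv, hR, _⟩ := M.R_A1 a h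
    rw [hR]; exact Set.Icc_subset_Icc (M.P_sub hu).1 (M.P_sub hv).2
  · obtain ⟨u, hu, hR⟩ := M.R_A2 a h
    rw [hR]; intro x hx; rw [hx]; exact M.P_sub hu

lemma aux_D0_sub (a : M.A) : M.D0 a ⊆ M.D a := by
  rcases M.A_cover a with h | h | h
  · rw [M.D0_A0 a h]; exact interior_subset
  · rw [M.D0_A12 a (Set.mem_union_left _ h)]
  · rw [M.D0_A12 a (Set.mem_union_right _ h)]

lemma aux_R0_sub (a : M.A) : M.R0 a ⊆ M.R a := by
  rcases M.A_cover a with h | h | h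
  · rw [M.R0_A01 a (Set.mem_union_left _ h)]; exact interior_subset
  · rw [M.R0_A01 a (Set.mem_union_right _ h)]; exact interior_subset
  · rw [M.R0_A2 a h]

lemma aux_D0_ne (a : M.A) : (M.D0 a).Nonempty := by
  rcases M.A_cover a with h | h | h
  · obtain ⟨p, hp, q, hq, hpq, _, hD⟩ := M.D_A0 a h
    rw [M.D0_A0 a h, hD, interior_Icc]
    exact Set.nonempty_Ioo.2 hpq
  · obtain ⟨p, hp, hD⟩ := M.D_A12 a (Set.mem_union_left _ h)
    rw [M.D0_A12 a (Set.mem_union_left _ h), hD]; exact ⟨p, rfl⟩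
  · obtain ⟨p, hp, hD⟩ := M.D_A12 a (Set.mem_union_right _ h)
    rw [M.D0_A12 a (Set.mem_union_right _ h), hD]; exact ⟨p, rfl⟩

/-- Core lemma: for `a ∈ A₀`, `f a` maps the interior of `D a` exactly onto
the interior of `R a`. -/
lemma aux_core {a : M.A} (ha : a ∈ M.A0) :
    ∀ x ∈ M.D a, (x ∈ M.D0 a ↔ M.f a x ∈ M.R0 a) := by
  obtain ⟨p, hpP, q, hqP, hpq, hnoP, hD⟩ := M.D_A0 a ha
  obtain ⟨u, huP, v, hvP, huv, hR⟩ := M.R_A0 a ha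
  obtain ⟨hfc, hfb⟩ := M.f_homeo a ha
  have hD0 : M.D0 a = Set.Ioo p q := by rw [M.D0_A0 a ha, hD, interior_Icc]
  have hR0 : M.R0 a = Set.Ioo u v := by
    rw [M.R0_A01 a (Set.mem_union_left _ ha), hR, interior_Icc]
  rw [hD, hR] at hfb
  rw [hD] at hfc
  have E : ∀ x0, x0 = p ∨ x0 = q → M.f a x0 = u ∨ M.f a x0 = v := by
    intro x0 hx0
    by_contra hcon
    push_neg at hcon
    have hx0m : x0 ∈ Set.Icc p q := by
      rcases hx0 with h | h <;> rw [h] <;> simp [hpq.le]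
    have hfm : M.f a x0 ∈ Set.Icc u v := hfb.mapsTo hx0m
    obtain ⟨xu, hxu, hfxu⟩ := hfb.surjOn (Set.left_mem_Icc.2 huv.le)
    obtain ⟨xv, hxv, hfxv⟩ := hfb.surjOn (Set.right_mem_Icc.2 huv.le)
    have hne1 : xu ≠ x0 := fun h => hcon.1 (by rw [← h]; exact hfxu)
    have hne2 : xv ≠ x0 := fun h => hcon.2 (by rw [← h]; exact hfxv)
    have hsub : Set.uIcc xu xv ⊆ Set.Icc p q := Set.uIcc_subset_Icc hxu hxv
    have hmem : M.f a x0 ∈ Set.uIcc (M.f a xu) (M.f a xv) := by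
      rw [hfxu, hfxv, Set.uIcc_of_le huv.le]
      exact hfm
    obtain ⟨c, hcmem, hfc0⟩ := intermediate_value_uIcc (hfc.mono hsub) hmem
    have hcx : c = x0 := hfb.injOn (hsub hcmem) hx0m hfc0
    rw [hcx, Set.mem_uIcc] at hcmem
    rcases hx0 with h | h
    · subst h
      have h1 : x0 < xu := lt_of_le_of_ne hxu.1 (Ne.symm hne1)
      have h2 : x0 < xv := lt_of_le_of_ne hxv.1 (Ne.symm hne2)
      rcases hcmem with ⟨h3, -⟩ | ⟨h3, -⟩ <;> linarith
    · subst h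
      have h1 : xu < x0 := lt_of_le_of_ne hxu.2 hne1
      have h2 : xv < x0 := lt_of_le_of_ne hxv.2 hne2
      rcases hcmem with ⟨-, h3⟩ | ⟨-, h3⟩ <;> linarith
  have hfpq : M.f a p ≠ M.f a q := by
    intro h
    exact hpq.ne (hfb.injOn (Set.left_mem_Icc.2 hpq.le) (Set.right_mem_Icc.2 hpq.le) h)
  intro x hx
  rw [hD] at hx
  rw [hD0, hR0]
  constructor
  · intro hxo
    have hfm : M.f a x ∈ Set.Icc u v := hfb.mapsTo hx
    have hxp : x ≠ p := fun h => by rw [h] at hxo; exact lt_irrefl p hxo.1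
    have hxq : x ≠ q := fun h => by rw [h] at hxo; exact lt_irrefl q hxo.2
    have hne_u : M.f a x ≠ u := by
      intro hfx
      rcases E p (Or.inl rfl) with hp' | hp'
      · exact hxp (hfb.injOn hx (Set.left_mem_Icc.2 hpq.le) (by rw [hfx, hp']))
      · rcases E q (Or.inr rfl) with hq' | hq'
        · exact hxq (hfb.injOn hx (Set.right_mem_Icc.2 hpq.le) (by rw [hfx, hq']))
        · exact hfpq (by rw [hp', hq'])
    have hne_v : M.f a x ≠ v := by
      intro hfx
      rcases E p (Or.inl rfl) with hp' | hp'
      · rcases E q (Or.inr rfl) with hq' | hq'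
        · exact hfpq (by rw [hp', hq'])
        · exact hxq (hfb.injOn hx (Set.right_mem_Icc.2 hpq.le) (by rw [hfx, hq']))
      · exact hxp (hfb.injOn hx (Set.left_mem_Icc.2 hpq.le) (by rw [hfx, hp']))
    exact ⟨lt_of_le_of_ne hfm.1 (Ne.symm hne_u), lt_of_le_of_ne hfm.2 hne_v⟩
  · intro hfo
    have hxp : x ≠ p := by
      intro h
      rcases E p (Or.inl rfl) with hp' | hp' <;> rw [h] at hfo <;> rw [hp'] at hfo
      · exact lt_irrefl u hfo.1
      · exact lt_irrefl v hfo.2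
    have hxq : x ≠ q := by
      intro h
      rcases E q (Or.inr rfl) with hq' | hq' <;> rw [h] at hfo <;> rw [hq'] at hfo
      · exact lt_irrefl u hfo.1
      · exact lt_irrefl v hfo.2
    exact ⟨lt_of_le_of_ne hx.1 (Ne.symm hxp), lt_of_le_of_ne hx.2 hxq⟩

lemma aux_f_mem {a : M.A} (ha : a ∈ M.A0) {x : ℝ} (hx : x ∈ M.D0 a) :
    M.f a x ∈ M.R0 a :=
  (M.aux_core ha x (M.aux_D0_sub a hx)).1 hx

lemma aux_g_mem {a : M.A} (ha : a ∈ M.A0) {y : ℝ} (hy : y ∈ M.R0 a) :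
    M.g a y ∈ M.D0 a ∧ (M.g a y, y) ∈ M.G0 a := by
  obtain ⟨hg1, hg2⟩ := M.g_A0 a ha
  have hyR : y ∈ M.R a := M.aux_R0_sub a hy
  obtain ⟨hgD, hfg⟩ := hg2 y hyR
  have hgD0 : M.g a y ∈ M.D0 a := (M.aux_core ha _ hgD).2 (by rw [hfg]; exact hy)
  refine ⟨hgD0, ?_⟩
  rw [M.G0_A0 a ha]
  exact ⟨hgD0, hfg.symm⟩

/-- Markov property of the partition. -/
lemma aux_markov {b c : M.A} {x : ℝ} (hx : x ∈ M.D0 b) (hx2 : x ∈ M.R0 c) :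
    M.D0 b ⊆ M.R0 c := by
  rcases M.A_cover b with hb | hb | hb
  · obtain ⟨p, hpP, q, hqP, hpq, hnoP, hD⟩ := M.D_A0 b hb
    have hD0 : M.D0 b = Set.Ioo p q := by rw [M.D0_A0 b hb, hD, interior_Icc]
    rw [hD0] at hx ⊢
    have RIoo : ∀ u v : ℝ, u ∈ (M.P : Set ℝ) → v ∈ (M.P : Set ℝ) →
        M.R0 c = Set.Ioo u v → Set.Ioo p q ⊆ M.R0 c := by
      intro u v huP hvP hR0
      rw [hR0] at hx2 ⊢
      have hup : u ≤ p := by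
        by_contra hcon
        push_neg at hcon
        exact hnoP u huP ⟨hcon, lt_trans hx2.1 hx.2⟩
      have hqv : q ≤ v := by
        by_contra hcon
        push_neg at hcon
        exact hnoP v hvP ⟨lt_trans hx.1 hx2.2, hcon⟩
      exact fun w hw => ⟨lt_of_le_of_lt hup hw.1, lt_of_lt_of_le hw.2 hqv⟩
    rcases M.A_cover c with hc | hc | hc
    · obtain ⟨u, huP, v, hvP, huv, hR⟩ := M.R_A0 c hc
      exact RIoo u v huP hvP (by rw [M.R0_A01 c (Set.mem_union_left _ hc), hR, interior_Icc])
    · obtain ⟨u, huP, v, hvP, huv, hR, -⟩ := M.R_A1 c hc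
      exact RIoo u v huP hvP (by rw [M.R0_A01 c (Set.mem_union_right _ hc), hR, interior_Icc])
    · obtain ⟨u, huP, hR⟩ := M.R_A2 c hc
      exfalso
      have hRu : M.R0 c = {u} := by rw [M.R0_A2 c hc, hR]
      rw [hRu] at hx2
      have hxu : x = u := hx2
      exact hnoP u huP ⟨hxu ▸ hx.1, hxu ▸ hx.2⟩
  · obtain ⟨pt, hptP, hDb⟩ := M.D_A12 b (Set.mem_union_left _ hb)
    have hD0 : M.D0 b = {pt} := by rw [M.D0_A12 b (Set.mem_union_left _ hb), hDb]
    rw [hD0] at hx ⊢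
    intro w hw
    have : w = x := by rw [Set.eq_of_mem_singleton hw, Set.eq_of_mem_singleton hx]
    rwa [this]
  · obtain ⟨pt, hptP, hDb⟩ := M.D_A12 b (Set.mem_union_right _ hb)
    have hD0 : M.D0 b = {pt} := by rw [M.D0_A12 b (Set.mem_union_right _ hb), hDb]
    rw [hD0] at hx ⊢
    intro w hw
    have : w = x := by rw [Set.eq_of_mem_singleton hw, Set.eq_of_mem_singleton hx]
    rwa [this]

lemma aux_G0_fst {a : M.A} {x y : ℝ} (h : (x, y) ∈ M.G0 a) : x ∈ M.D0 a := by
  rcases M.A_cover a with h0 | h1 | h2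
  · rw [M.G0_A0 a h0] at h; exact h.1
  · rw [M.G0_A1 a h1] at h
    rw [M.D0_A12 a (Set.mem_union_left _ h1)]
    exact h.1
  · rw [M.G0_A2 a h2, M.Gr_A12 a (Set.mem_union_right _ h2)] at h
    rw [M.D0_A12 a (Set.mem_union_right _ h2)]
    exact h.1

lemma aux_G0_snd {a : M.A} {x y : ℝ} (h : (x, y) ∈ M.G0 a) : y ∈ M.R0 a := by
  rcases M.A_cover a with h0 | h1 | h2
  · rw [M.G0_A0 a h0] at h
    have := M.aux_f_mem h0 h.1
    have h2 := h.2
    dsimp only at h2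
    rw [h2]
    exact this
  · rw [M.G0_A1 a h1] at h; exact h.2
  · rw [M.G0_A2 a h2, M.Gr_A12 a (Set.mem_union_right _ h2)] at h
    rw [M.R0_A2 a h2]
    exact h.2

lemma aux_G0_sub_Gr (a : M.A) : M.G0 a ⊆ M.Gr a := by
  rcases M.A_cover a with h0 | h1 | h2
  · rw [M.G0_A0 a h0, M.Gr_A0 a h0]
    intro w hw
    exact ⟨M.aux_D0_sub a hw.1, hw.2⟩
  · rw [M.G0_A1 a h1, M.Gr_A12 a (Set.mem_union_left _ h1)]
    exact Set.prod_mono subset_rfl (M.aux_R0_sub a)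
  · rw [M.G0_A2 a h2]

lemma aux_Gr_sub_GF (a : M.A) : M.Gr a ⊆ M.GF :=
  Set.subset_iUnion (fun a => M.Gr a) a

/-- Existence and essential uniqueness of itineraries. -/
lemma aux_itin (hpp : M.ProperlyParametrized) (x : M.X) :
    ∃ z : ℕ → M.A, z ∈ M.SFT ∧ ∀ k, (x.1 k, x.1 (k + 1)) ∈ M.G0 (z k) := by
  have hex : ∀ k, ∃ a, (x.1 k, x.1 (k + 1)) ∈ M.G0 a := by
    intro k
    have hk := x.2.2 k
    rw [← hpp.1] at hk
    exact Set.mem_iUnion.1 hk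
  choose z hzspec using hex
  refine ⟨z, ?_, hzspec⟩
  intro k
  exact M.aux_markov (M.aux_G0_fst (hzspec (k + 1))) (M.aux_G0_snd (hzspec k))

lemma aux_G0_unique (hpp : M.ProperlyParametrized) {a b : M.A} {p : ℝ × ℝ}
    (h1 : p ∈ M.G0 a) (h2 : p ∈ M.G0 b) : a = b := by
  by_contra hne
  exact Set.disjoint_left.1 (hpp.2 a b hne) h1 h2

/-- The reachability relation on symbols. -/
def AuxReach (a b : M.A) : Prop :=
  ∃ z ∈ M.SFT, ∃ s t : ℕ, s ≤ t ∧ z s = a ∧ z t = b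

lemma aux_reach_of_seq {z : ℕ → M.A} (hz : z ∈ M.SFT) {s t : ℕ} (h : s ≤ t) :
    M.AuxReach (z s) (z t) := ⟨z, hz, s, t, h, rfl, rfl⟩

lemma aux_reach_trans {a b c : M.A} (h1 : M.AuxReach a b) (h2 : M.AuxReach b c) :
    M.AuxReach a c := by
  obtain ⟨z, hz, s, t, hst, hza, hzb⟩ := h1
  obtain ⟨z', hz', s', t', hst', hzb', hzc⟩ := h2
  refine ⟨fun k => if k < t then z k else z' (s' + (k - t)), ?_, s, t + (t' - s'),
    by omega, ?_, ?_⟩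
  · intro n
    by_cases hn : n + 1 < t
    · have hn' : n < t := by omega
      simp only [if_pos hn, if_pos hn']
      exact hz n
    · by_cases hn2 : n < t
      · have ht : n + 1 = t := by omega
        simp only [if_pos hn2, if_neg hn]
        have e : s' + (n + 1 - t) = s' := by omega
        rw [e, hzb', ← hzb, ← ht]
        exact hz n
      · simp only [if_neg hn, if_neg hn2]
        have e1 : s' + (n + 1 - t) = (s' + (n - t)) + 1 := by omega
        rw [e1]
        exact hz' (s' + (n - t))
  · by_cases hs : s < t
    · simp only [if_pos hs]; exact hza
    · have hseq : s = t := by omega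
      simp only [if_neg hs]
      have e : s' + (s - t) = s' := by omega
      rw [e, hzb', ← hzb, ← hseq]
      exact hza
  · have hnot : ¬ t + (t' - s') < t := by omega
    simp only [if_neg hnot]
    have e : s' + (t + (t' - s') - t) = t' := by omega
    rw [e]
    exact hzc

/-- Special labeling of a trajectory at an offset. -/
def SpecAt (x : M.X) (t : ℕ) {n : ℕ} (u : Fin n → M.A) : Prop :=
  ∀ k : Fin n, (x.1 ((k : ℕ) + t), x.1 ((k : ℕ) + t + 1)) ∈ M.G0 (u k)

lemma aux_backstep {c : M.A} {y : ℝ} (hy : y ∈ M.R0 c) :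
    ∃ w ∈ M.D0 c, (w, y) ∈ M.G0 c := by
  rcases M.A_cover c with h0 | h1 | h2
  · obtain ⟨hg, hfg⟩ := M.aux_g_mem h0 hy
    exact ⟨M.g c y, hg, hfg⟩
  · obtain ⟨pt, hptP, hDc⟩ := M.D_A12 c (Set.mem_union_left _ h1)
    refine ⟨pt, ?_, ?_⟩
    · rw [M.D0_A12 c (Set.mem_union_left _ h1), hDc]; rfl
    · rw [M.G0_A1 c h1]
      exact Set.mem_prod.2 ⟨by rw [hDc]; rfl, hy⟩
  · obtain ⟨pt, hptP, hDc⟩ := M.D_A12 c (Set.mem_union_right _ h2)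
    refine ⟨pt, ?_, ?_⟩
    · rw [M.D0_A12 c (Set.mem_union_right _ h2), hDc]; rfl
    · rw [M.G0_A2 c h2, M.Gr_A12 c (Set.mem_union_right _ h2)]
      refine Set.mem_prod.2 ⟨by rw [hDc]; rfl, ?_⟩
      rw [← M.R0_A2 c h2]
      exact hy

lemma aux_chain (N : ℕ) (c : ℕ → M.A) (hc : ∀ k, M.D0 (c (k + 1)) ⊆ M.R0 (c k)) :
    ∃ xs : ℕ → ℝ, xs N ∈ M.D0 (c N) ∧
      ∀ k < N, xs k ∈ M.D0 (c k) ∧ (xs k, xs (k + 1)) ∈ M.G0 (c k) := by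
  induction N generalizing c with
  | zero =>
      obtain ⟨w, hw⟩ := M.aux_D0_ne (c 0)
      exact ⟨fun _ => w, hw, fun k hk => absurd hk (Nat.not_lt_zero k)⟩
  | succ N ih =>
      obtain ⟨ys, hysN, hys⟩ := ih (fun k => c (k + 1)) (fun k => hc (k + 1))
      have hy0 : ys 0 ∈ M.D0 (c 1) := by
        rcases Nat.eq_zero_or_pos N with h | h
        · subst h; exact hysN
        · exact (hys 0 h).1
      obtain ⟨w, hw, hwpair⟩ := M.aux_backstep (hc 0 hy0)
      refine ⟨fun k => if k = 0 then w else ys (k - 1), ?_, ?_⟩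
      · simp only [if_neg (Nat.succ_ne_zero N), Nat.add_sub_cancel]
        exact hysN
      · intro k hk
        rcases Nat.eq_zero_or_pos k with h | h
        · subst h
          simp only [if_pos rfl, if_neg (Nat.one_ne_zero), Nat.sub_self]
          exact ⟨hw, hwpair⟩
        · have h1 : ¬ k = 0 := by omega
          have h2 : ¬ k + 1 = 0 := by omega
          simp only [if_neg h1, if_neg h2]
          have hk1 : k - 1 < N := by omega
          obtain ⟨hm, hp⟩ := hys (k - 1) hk1
          have e : k - 1 + 1 = k := by omega
          rw [e] at hm hp
          have e2 : k + 1 - 1 = k := by omega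
          rw [e2]
          exact ⟨hm, hp⟩

lemma aux_forward : ∀ y ∈ Set.Icc (0:ℝ) 1, ∃ y', y' ∈ Set.Icc (0:ℝ) 1 ∧ (y, y') ∈ M.GF := by
  intro y hy
  have hmem : y ∈ ⋃ a : M.A, M.D a := by rw [← M.cover]; exact hy
  obtain ⟨a, hya⟩ := Set.mem_iUnion.1 hmem
  rcases M.A_cover a with h0 | h1 | h2
  · refine ⟨M.f a y, M.aux_R_sub a ((M.f_homeo a h0).2.mapsTo hya), ?_⟩
    refine M.aux_Gr_sub_GF a ?_
    rw [M.Gr_A0 a h0]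
    exact ⟨hya, rfl⟩
  · obtain ⟨u, huP, v, hvP, huv, hR, -⟩ := M.R_A1 a h1
    refine ⟨u, M.P_sub huP, ?_⟩
    refine M.aux_Gr_sub_GF a ?_
    rw [M.Gr_A12 a (Set.mem_union_left _ h1)]
    refine Set.mem_prod.2 ⟨hya, ?_⟩
    rw [hR]
    exact Set.left_mem_Icc.2 huv.le
  · obtain ⟨u, huP, hR⟩ := M.R_A2 a h2
    refine ⟨u, M.P_sub huP, ?_⟩
    refine M.aux_Gr_sub_GF a ?_
    rw [M.Gr_A12 a (Set.mem_union_right _ h2)]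
    refine Set.mem_prod.2 ⟨hya, ?_⟩
    rw [hR]
    rfl

lemma aux_exists_specAt {n : ℕ} {u : Fin n → M.A} (hu : u ∈ M.Lang n) :
    ∃ x : M.X, M.SpecAt x 0 u := by
  obtain ⟨z, hz, m, hm⟩ := hu
  obtain ⟨xs, hxsn, hxs⟩ := M.aux_chain n (fun k => z (m + k)) (fun k => by
    have hk := hz (m + k)
    show M.D0 (z (m + (k + 1))) ⊆ M.R0 (z (m + k))
    have e : m + (k + 1) = m + k + 1 := by omega
    rw [e]
    exact hk)
  choose Φ hΦ using M.aux_forward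
  have hxsnI : xs n ∈ Set.Icc (0:ℝ) 1 := M.aux_D_sub _ (M.aux_D0_sub _ hxsn)
  let e : ℕ → {r : ℝ // r ∈ Set.Icc (0:ℝ) 1} :=
    fun k => Nat.rec ⟨xs n, hxsnI⟩ (fun _ p => ⟨Φ p.1 p.2, (hΦ p.1 p.2).1⟩) k
  have he0 : (e 0).1 = xs n := rfl
  have hestep : ∀ k, ((e k).1, (e (k + 1)).1) ∈ M.GF := fun k => (hΦ (e k).1 (e k).2).2
  set x : ℕ → ℝ := fun k => if h : k < n then xs k else (e (k - n)).1 with hxdef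
  have hxle : ∀ k, k ≤ n → x k = xs k := by
    intro k hk
    by_cases h : k < n
    · simp [hxdef, h]
    · have hkn : k = n := by omega
      subst hkn
      simp only [hxdef, dif_neg h, Nat.sub_self]
      exact he0
  have hxmem : ∀ k, x k ∈ Set.Icc (0:ℝ) 1 := by
    intro k
    by_cases h : k < n
    · simp only [hxdef, dif_pos h]
      exact M.aux_D_sub _ (M.aux_D0_sub _ (hxs k h).1)
    · simp only [hxdef, dif_neg h]
      exact (e (k - n)).2
  have hpair : ∀ k, (x k, x (k + 1)) ∈ M.GF := by
    intro k
    by_cases h : k < n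
    · rw [hxle k (by omega), hxle (k + 1) (by omega)]
      exact M.aux_Gr_sub_GF _ (M.aux_G0_sub_Gr _ (hxs k h).2)
    · have h1 : ¬ k + 1 < n := by omega
      have e2 : k + 1 - n = k - n + 1 := by omega
      simp only [hxdef, dif_neg h, dif_neg h1, e2]
      exact hestep (k - n)
  refine ⟨⟨x, hxmem, hpair⟩, ?_⟩
  intro k
  have hk : (k : ℕ) < n := k.isLt
  show (x ((k : ℕ) + 0), x ((k : ℕ) + 0 + 1)) ∈ M.G0 (u k)
  rw [Nat.add_zero, hxle (k : ℕ) hk.le, hxle ((k : ℕ) + 1) (by omega), hm k]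
  exact (hxs (k : ℕ) hk).2

lemma aux_shift_iter_apply (t : ℕ) (x : M.X) (k : ℕ) :
    ((M.shift^[t]) x).1 k = x.1 (k + t) := by
  induction t generalizing x with
  | zero => rfl
  | succ t ih =>
      rw [Function.iterate_succ_apply]
      rw [ih (M.shift x)]
      rfl

lemma aux_shift_continuous : Continuous M.shift := by
  apply Continuous.subtype_mk
  exact continuous_pi fun k => (continuous_apply (k + 1)).comp continuous_subtype_val

lemma aux_specAt_of_shift {s : ℕ} {x : M.X} {n : ℕ} {u : Fin n → M.A}
    (h : M.SpecAt (M.shift^[s] x) 0 u) : M.SpecAt x s u := by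
  intro k
  have hk := h k
  rw [M.aux_shift_iter_apply, M.aux_shift_iter_apply] at hk
  have e1 : (k : ℕ) + 0 + s = (k : ℕ) + s := by omega
  have e2 : (k : ℕ) + 0 + 1 + s = (k : ℕ) + s + 1 := by omega
  rw [e1, e2] at hk
  exact hk

lemma aux_essential_open_ne {n : ℕ} {u : Fin n → M.A} (hu : M.EssentialWord u) :
    IsOpen {x : M.X | M.SpecAt x 0 u} ∧ {x : M.X | M.SpecAt x 0 u}.Nonempty := by
  constructor
  · have hmem : ∀ x : M.X, (fun i : Fin (n + 1) => x.1 (i : ℕ)) ∈ M.finTraj (n + 1) :=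
      fun x => ⟨fun i => x.2.1 (i : ℕ), fun i h => x.2.2 (i : ℕ)⟩
    let π : M.X → M.finTraj (n + 1) := fun x => ⟨fun i : Fin (n + 1) => x.1 (i : ℕ), hmem x⟩
    have hπc : Continuous π := by
      apply Continuous.subtype_mk
      exact continuous_pi fun i => (continuous_apply ((i : ℕ))).comp continuous_subtype_val
    have hset : {x : M.X | M.SpecAt x 0 u} = π ⁻¹' {s : M.finTraj (n + 1) | M.SpecialLabeled s.1 u} := by
      ext x
      simp only [Set.mem_setOf_eq, Set.mem_preimage]
      constructor
      · intro h i
        have hi := h i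
        simp only [Nat.add_zero] at hi
        show ((fun i : Fin (n+1) => x.1 (i : ℕ)) i.castSucc,
          (fun i : Fin (n+1) => x.1 (i : ℕ)) i.succ) ∈ M.G0 (u i)
        simp only [Fin.coe_castSucc, Fin.val_succ]
        exact hi
      · intro h k
        have hk := h k
        simp only [π, Fin.coe_castSucc, Fin.val_succ] at hk
        simp only [Nat.add_zero]
        exact hk
    rw [hset]
    exact hu.2.preimage hπc
  · exact M.aux_exists_specAt hu.1

end MarkovMultiMap

/-- An isolated point of a topologically transitive system is periodic. -/
lemma aux_isolated_periodic {α : Type*} [TopologicalSpace α] [T1Space α] {T : α → α}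
    (hT : Continuous T) (htt : TopTransitive T) {y : α} (hy : IsOpen {y}) :
    ∃ p : ℕ, 1 ≤ p ∧ T^[p] y = y := by
  classical
  set S := closure (Set.range fun n => T^[n + 1] y) with hS
  by_cases hyS : y ∈ S
  · rw [hS, mem_closure_iff] at hyS
    obtain ⟨w, hw1, hw2⟩ := hyS {y} hy rfl
    obtain ⟨k, hk⟩ := hw2
    rw [Set.mem_singleton_iff] at hw1
    refine ⟨k + 1, by omega, ?_⟩
    show T^[k + 1] y = y
    rw [show T^[k + 1] y = w from hk, hw1]
  · exfalso
    have hdense : Dense (Set.range fun n => T^[n] y) := by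
      rw [dense_iff_inter_open]
      intro W hW hWne
      obtain ⟨n, hn⟩ := htt {y} W hy hW ⟨y, rfl⟩ hWne
      obtain ⟨w, ⟨v, hv, rfl⟩, hwW⟩ := hn
      rw [Set.mem_singleton_iff] at hv
      exact ⟨T^[n] v, hwW, n, by rw [hv]⟩
    have hsplit : Set.range (fun n => T^[n] y) = {y} ∪ Set.range fun n => T^[n + 1] y := by
      ext w
      constructor
      · rintro ⟨n, rfl⟩
        cases n with
        | zero => exact Or.inl rfl
        | succ n => exact Or.inr ⟨n, rfl⟩
      · rintro (h | ⟨n, rfl⟩)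
        · exact ⟨0, (Set.eq_of_mem_singleton h).symm⟩
        · exact ⟨n + 1, rfl⟩
    have huniv : (Set.univ : Set α) = {y} ∪ S := by
      rw [← hdense.closure_eq, hsplit, closure_union, closure_singleton]
    have hScomp : S = {y}ᶜ := by
      apply Set.eq_of_subset_of_subset
      · intro w hw hwy
        rw [Set.mem_singleton_iff] at hwy
        exact hyS (hwy ▸ hw)
      · intro w hw
        have hww : w ∈ ({y} : Set α) ∪ S := huniv ▸ Set.mem_univ w
        rcases hww with h | h
        · exact absurd h hw
        · exact h
    have hSopen : IsOpen S := by rw [hScomp]; exact isClosed_singleton.isOpen_compl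
    have hSne : S.Nonempty := ⟨T^[1] y, subset_closure ⟨0, rfl⟩⟩
    have hTsub : T '' S ⊆ S := by
      rw [hS]
      refine Set.Subset.trans (image_closure_subset_closure_image hT) (closure_mono ?_)
      rintro w ⟨v, ⟨k, rfl⟩, rfl⟩
      refine ⟨k + 1, ?_⟩
      show T^[k + 1 + 1] y = T (T^[k + 1] y)
      rw [Function.iterate_succ_apply' T (k + 1) y]
    have hTS : ∀ n, T^[n] '' S ⊆ S := by
      intro n
      induction n with
      | zero => simp
      | succ n ih =>
          intro w hw
          obtain ⟨v, hv, rfl⟩ := hw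
          rw [Function.iterate_succ_apply']
          exact hTsub ⟨T^[n] v, ih ⟨v, hv, rfl⟩, rfl⟩
    obtain ⟨n, hn⟩ := htt S {y} hSopen hy hSne ⟨y, rfl⟩
    obtain ⟨w, hwS, hwy⟩ := hn
    rw [Set.mem_singleton_iff] at hwy
    exact hyS (hwy ▸ hTS n hwS)

/-- In a T2 transitive system, every nonempty open set returns to itself at a
positive time. -/
lemma aux_return {α : Type*} [TopologicalSpace α] [T2Space α] {T : α → α}
    (hT : Continuous T) (htt : TopTransitive T) {U : Set α} (hU : IsOpen U)
    (hne : U.Nonempty) : ∃ t, 1 ≤ t ∧ ∃ x ∈ U, T^[t] x ∈ U := by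
  classical
  by_cases h2 : ∃ x ∈ U, ∃ z ∈ U, x ≠ z
  · obtain ⟨x, hx, z, hz, hxz⟩ := h2
    obtain ⟨W1, W2, hW1, hW2, hxW1, hzW2, hdisj⟩ := t2_separation hxz
    obtain ⟨t, hnet⟩ := htt (U ∩ W1) (U ∩ W2) (hU.inter hW1) (hU.inter hW2)
      ⟨x, hx, hxW1⟩ ⟨z, hz, hzW2⟩
    obtain ⟨w, ⟨v, hv, rfl⟩, hw2⟩ := hnet
    refine ⟨t, ?_, v, hv.1, hw2.1⟩
    rcases Nat.eq_zero_or_pos t with h | h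
    · subst h
      simp only [Function.iterate_zero_apply] at hw2
      exact absurd hw2.2 (Set.disjoint_left.1 hdisj hv.2)
    · exact h
  · push_neg at h2
    obtain ⟨y, hy⟩ := hne
    have hUy : U = {y} := by
      apply Set.eq_of_subset_of_subset
      · intro w hw
        exact h2 w hw y hy
      · intro w hw
        rw [Set.mem_singleton_iff] at hw
        rw [hw]
        exact hy
    obtain ⟨p, hp1, hp2⟩ := aux_isolated_periodic hT htt (hUy ▸ hU)
    exact ⟨p, hp1, y, hy, by rw [hp2]; exact hy⟩

namespace MarkovMultiMap

variable (M : MarkovMultiMap)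

lemma aux_descent {n t₁ q : ℕ} {B : Type} (u : Fin n → B) (a b : B)
    (hper : ∀ k, ∀ h : k + t₁ < n, u ⟨k + t₁, h⟩ = u ⟨k, by omega⟩)
    (ht₁ : 1 ≤ t₁) {p : ℕ} (hp : p < n) (hq : q < p) (hua : u ⟨p, hp⟩ = a)
    (hub : u ⟨q, by omega⟩ = b) (hqt : q + t₁ < p) :
    ∃ p' q' : ℕ, ∃ hp' : p' < n, ∃ hq' : q' < n,
      p' ≤ q' ∧ u ⟨p', hp'⟩ = a ∧ u ⟨q', hq'⟩ = b := by
  have key : ∀ p, ∀ hp : p < n, u ⟨p, hp⟩ = a → q < p →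
      ∃ p', ∃ hp' : p' < n, q < p' ∧ p' ≤ q + t₁ ∧ u ⟨p', hp'⟩ = a := by
    intro p
    induction p using Nat.strong_induction_on with
    | _ p ih =>
      intro hp hua0 hq0
      by_cases hle : p ≤ q + t₁
      · exact ⟨p, hp, hq0, hle, hua0⟩
      · have h1 : p - t₁ < p := by omega
        have h2 : p - t₁ < n := by omega
        have h3 : q < p - t₁ := by omega
        have hpe := hper (p - t₁) (by omega)
        have hmk : (⟨p - t₁ + t₁, by omega⟩ : Fin n) = ⟨p, hp⟩ := Fin.mk_eq_mk.2 (by omega)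
        rw [hmk, hua0] at hpe
        exact ih (p - t₁) h1 h2 hpe.symm h3
  obtain ⟨p', hp', hq1, hq2, hua'⟩ := key p hp hua hq
  have hq'n : q + t₁ < n := by omega
  have hub' : u ⟨q + t₁, hq'n⟩ = b := by rw [hper q hq'n]; exact hub
  exact ⟨p', q + t₁, hp', hq'n, by omega, hua', hub'⟩

lemma aux_reach_of_essential (hpp : M.ProperlyParametrized)
    (htrans : TopTransitive M.shift) {a b : M.A}
    (ha : M.EssentialSymbol a) (hb : M.EssentialSymbol b) : M.AuxReach a b := by
  obtain ⟨n, u, hu, i, hia⟩ := ha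
  obtain ⟨m, v, hv, j, hjb⟩ := hb
  obtain ⟨hUo, hUne⟩ := M.aux_essential_open_ne hu
  obtain ⟨hVo, hVne⟩ := M.aux_essential_open_ne hv
  obtain ⟨t₀, hne0⟩ := htrans _ _ hUo hVo hUne hVne
  obtain ⟨y, ⟨x, hxU, rfl⟩, hyV⟩ := hne0
  obtain ⟨z, hz, hzspec⟩ := M.aux_itin hpp x
  have hxU2 : M.SpecAt x 0 u := hxU
  have hyV2 : M.SpecAt x t₀ v := M.aux_specAt_of_shift hyV
  have hzu : ∀ k : Fin n, z (k : ℕ) = u k := by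
    intro k
    have h1 := hxU2 k
    simp only [Nat.add_zero] at h1
    exact M.aux_G0_unique hpp (hzspec (k : ℕ)) h1
  have hzv : ∀ k : Fin m, z ((k : ℕ) + t₀) = v k := fun k =>
    M.aux_G0_unique hpp (hzspec ((k : ℕ) + t₀)) (hyV2 k)
  rcases le_or_gt (i : ℕ) ((j : ℕ) + t₀) with hle | hlt
  · refine ⟨z, hz, (i : ℕ), (j : ℕ) + t₀, hle, ?_, ?_⟩
    · rw [hzu i, hia]
    · rw [hzv j, hjb]
  · have hq : (j : ℕ) + t₀ < n := lt_trans hlt i.isLt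
    have hbq : u ⟨(j : ℕ) + t₀, hq⟩ = b :=
      (hzu ⟨(j : ℕ) + t₀, hq⟩).symm.trans ((hzv j).trans hjb)
    obtain ⟨t₁, ht₁, x₁, hx₁U, hx₁Us⟩ :=
      aux_return (M.aux_shift_continuous) htrans hUo hUne
    obtain ⟨w, hw, hwspec⟩ := M.aux_itin hpp x₁
    have hx₁Ua : M.SpecAt x₁ 0 u := hx₁U
    have hx₁Ub : M.SpecAt x₁ t₁ u := M.aux_specAt_of_shift hx₁Us
    have hwu : ∀ k : Fin n, w (k : ℕ) = u k := by
      intro k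
      have h1 := hx₁Ua k
      simp only [Nat.add_zero] at h1
      exact M.aux_G0_unique hpp (hwspec (k : ℕ)) h1
    have hwu2 : ∀ k : Fin n, w ((k : ℕ) + t₁) = u k := fun k =>
      M.aux_G0_unique hpp (hwspec ((k : ℕ) + t₁)) (hx₁Ub k)
    rcases le_or_gt (i : ℕ) ((j : ℕ) + t₀ + t₁) with h2le | h2lt
    · refine ⟨w, hw, (i : ℕ), (j : ℕ) + t₀ + t₁, h2le, ?_, ?_⟩
      · rw [hwu i, hia]
      · exact (hwu2 ⟨(j : ℕ) + t₀, hq⟩).trans hbq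
    · have hper : ∀ k, ∀ h : k + t₁ < n, u ⟨k + t₁, h⟩ = u ⟨k, by omega⟩ := by
        intro k h
        have e1 := hwu ⟨k + t₁, h⟩
        have e2 := hwu2 ⟨k, by omega⟩
        exact e1.symm.trans e2
      obtain ⟨P, Q, hP, hQ, hPQ, huaP, hubQ⟩ :=
        aux_descent u a b hper ht₁ i.isLt hlt hia hbq h2lt
      obtain ⟨zw, hzw, mw, hmw⟩ := hu.1
      refine ⟨zw, hzw, mw + P, mw + Q, by omega, ?_, ?_⟩
      · exact (hmw ⟨P, hP⟩).symm.trans huaP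
      · exact (hmw ⟨Q, hQ⟩).symm.trans hubQ

lemma aux_exists_component (C0 : Set M.A) (h : M.IrreducibleSet C0) :
    ∃ C, M.IrreducibleComponent C ∧ C0 ⊆ C := by
  classical
  haveI : Finite M.A := M.finA
  have hSfin : {C : Set M.A | M.IrreducibleSet C ∧ C0 ⊆ C}.Finite := Set.toFinite _
  obtain ⟨C, hC, hmax⟩ := Set.Finite.exists_maximalFor id _ hSfin ⟨C0, h, subset_rfl⟩
  refine ⟨C, ⟨hC.1, ?_⟩, hC.2⟩
  intro C' hC' hsub
  exact (hmax ⟨hC', hC.2.trans hsub⟩ hsub).antisymm hsub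

end MarkovMultiMap

/-- If the forward trajectory system `(X,T)` of a properly parametrized Markov
multi-map is topologically transitive, then `Σ_M` satisfies the
Irreducibility Condition (IC). -/
theorem stmt0 (M : MarkovMultiMap) (hpp : M.ProperlyParametrized)
    (htrans : TopTransitive M.shift) : M.IC := by
  classical
  rcases Set.eq_empty_or_nonempty M.Ess with hE | ⟨e, he⟩
  · obtain ⟨C, hC, -⟩ := M.aux_exists_component ∅ (fun a ha => absurd ha (Set.notMem_empty a))
    exact ⟨C, hC, by rw [hE]; exact Set.empty_subset _⟩
  · set C0 : Set M.A := {c | M.AuxReach e c ∧ M.AuxReach c e} with hC0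
    have hEssC0 : M.Ess ⊆ C0 := fun a haE =>
      ⟨M.aux_reach_of_essential hpp htrans he haE, M.aux_reach_of_essential hpp htrans haE he⟩
    have hirr : M.IrreducibleSet C0 := by
      intro a ha b hb
      obtain ⟨z, hz, s, t, hst, hzs, hzt⟩ := M.aux_reach_trans ha.2 hb.1
      refine ⟨t - s, fun i : Fin (t - s + 1) => z (s + (i : ℕ)), ⟨⟨z, hz, s, fun i => rfl⟩, ?_⟩, ?_, ?_⟩
      · intro i
        have hle : s + (i : ℕ) ≤ t := by have := i.isLt; omega
        constructor
        · refine M.aux_reach_trans ha.1 ?_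
          have : M.AuxReach (z s) (z (s + (i : ℕ))) := M.aux_reach_of_seq hz (by omega)
          rwa [hzs] at this
        · refine M.aux_reach_trans ?_ hb.2
          have : M.AuxReach (z (s + (i : ℕ))) (z t) := M.aux_reach_of_seq hz hle
          rwa [hzt] at this
      · simpa using hzs
      · show z (s + ((Fin.last (t - s)) : ℕ)) = b
        have : s + ((Fin.last (t - s)) : ℕ) = t := by simp [Fin.last]; omega
        rw [this, hzt]
    obtain ⟨C, hC, hsub⟩ := M.aux_exists_component C0 hirr
    exact ⟨C, hC, hEssC0.trans hsub⟩
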